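/- Let d = (7 − √21)/14. Let x, y, a, b be real numbers with x ∈ [1−d, 1], y ∈ [1−d, 1], a ∈ [0, d], b ∈ [0, d]. Define Ŵ₇(x,y,a,b) = (x−a)·max(1−y−a, 0)/((x+y−1−a)·(x+y−1)) + (x−a)²·(x+y−1−a)·max(1−x−b, 0)/((x+y−1−a−b)·(x+y−1−b)·(x+y−1)·(y−b)) + (x−a)·max(1−y−a, 0)/((x+y−1−a−b)·(x+y−1)). Then Ŵ₇(x,y,a,b) ≤ Ŵ₇(x,1−d,a,b). -/
import Mathlib


/-- The objective function `Ŵ₇` of program (P7), written in the variables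
`a = x − e₀`, `b = y − f`. -/
noncomputable def W7hat (x y a b : ℝ) : ℝ :=
  (x - a) * max (1 - y - a) 0 / ((x + y - 1 - a) * (x + y - 1))
    + (x - a) ^ 2 * (x + y - 1 - a) * max (1 - x - b) 0 /
        ((x + y - 1 - a - b) * (x + y - 1 - b) * (x + y - 1) * (y - b))
    + (x - a) * max (1 - y - a) 0 / ((x + y - 1 - a - b) * (x + y - 1))

/-- Under the constraints of program (P7) with `d = (7−√21)/14`,
the objective `Ŵ₇` does not decrease when `y` is replaced by its lower bound
`1 − d`. -/
theorem W7hat_le (d x y a b : ℝ)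
    (hd : d = (7 - Real.sqrt 21) / 14)
    (hx : x ∈ Set.Icc (1 - d) 1) (hy : y ∈ Set.Icc (1 - d) 1)
    (ha : a ∈ Set.Icc 0 d) (hb : b ∈ Set.Icc 0 d) :
    W7hat x y a b ≤ W7hat x (1 - d) a b := by
  obtain ⟨hx1, hx2⟩ := hx
  obtain ⟨hy1, hy2⟩ := hy
  obtain ⟨ha1, ha2⟩ := ha
  obtain ⟨hb1, hb2⟩ := hb
  have hs21 : (4.5 : ℝ) ≤ Real.sqrt 21 := by
    rw [show (4.5 : ℝ) = Real.sqrt (4.5 ^ 2) from (Real.sqrt_sq (by norm_num)).symm]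
    exact Real.sqrt_le_sqrt (by norm_num)
  have hd18 : d ≤ 0.18 := by rw [hd]; linarith
  set y' : ℝ := 1 - d with hy'
  have hK : 0 ≤ max (1 - x - b) 0 := le_max_right _ _
  have hM : 0 ≤ max (1 - y - a) 0 := le_max_right _ _
  have hM' : 0 ≤ max (1 - y' - a) 0 := le_max_right _ _
  have hMle : max (1 - y - a) 0 ≤ max (1 - y' - a) 0 :=
    max_le_max (by linarith) le_rfl
  have hxa : 0 < x - a := by linarith
  have hs : 0 < x + y - 1 := by linarith
  have hsa : 0 < x + y - 1 - a := by linarith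
  have hsb : 0 < x + y - 1 - b := by linarith
  have hsab : 0 < x + y - 1 - a - b := by linarith
  have hyb : 0 < y - b := by linarith
  have hs' : 0 < x + y' - 1 := by linarith
  have hsa' : 0 < x + y' - 1 - a := by linarith
  have hsb' : 0 < x + y' - 1 - b := by linarith
  have hsab' : 0 < x + y' - 1 - a - b := by linarith
  have hyb' : 0 < y' - b := by linarith
  have t1 : (x - a) * max (1 - y - a) 0 / ((x + y - 1 - a) * (x + y - 1))
      ≤ (x - a) * max (1 - y' - a) 0 / ((x + y' - 1 - a) * (x + y' - 1)) := by
    apply div_le_div₀ (mul_nonneg hxa.le hM')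
      (mul_le_mul_of_nonneg_left hMle hxa.le) (by positivity)
    exact mul_le_mul (by linarith) (by linarith) hs'.le hsa.le
  have t3 : (x - a) * max (1 - y - a) 0 / ((x + y - 1 - a - b) * (x + y - 1))
      ≤ (x - a) * max (1 - y' - a) 0 / ((x + y' - 1 - a - b) * (x + y' - 1)) := by
    apply div_le_div₀ (mul_nonneg hxa.le hM')
      (mul_le_mul_of_nonneg_left hMle hxa.le) (by positivity)
    exact mul_le_mul (by linarith) (by linarith) hs'.le hsab.le
  have step1 : (x + y - 1 - a) * (x + y' - 1 - a - b)
      ≤ (x + y' - 1 - a) * (x + y - 1 - a - b) := by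
    nlinarith [mul_nonneg hb1 (by linarith : (0:ℝ) ≤ y - y')]
  have step2 : (x + y' - 1 - b) * ((x + y' - 1) * (y' - b))
      ≤ (x + y - 1 - b) * ((x + y - 1) * (y - b)) := by
    apply mul_le_mul (by linarith) ?_ (by positivity) hsb.le
    exact mul_le_mul (by linarith) (by linarith) hyb'.le hs.le
  have key : (x + y - 1 - a) * ((x + y' - 1 - a - b) * (x + y' - 1 - b) * (x + y' - 1) * (y' - b))
      ≤ (x + y' - 1 - a) * ((x + y - 1 - a - b) * (x + y - 1 - b) * (x + y - 1) * (y - b)) := by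
    have h := mul_le_mul step1 step2 (by positivity) (mul_nonneg hsa'.le hsab.le)
    linear_combination h
  have t2 : (x - a) ^ 2 * (x + y - 1 - a) * max (1 - x - b) 0 /
        ((x + y - 1 - a - b) * (x + y - 1 - b) * (x + y - 1) * (y - b))
      ≤ (x - a) ^ 2 * (x + y' - 1 - a) * max (1 - x - b) 0 /
        ((x + y' - 1 - a - b) * (x + y' - 1 - b) * (x + y' - 1) * (y' - b)) := by
    rw [div_le_div_iff₀ (by positivity) (by positivity)]
    have h2 := mul_le_mul_of_nonneg_left key (mul_nonneg (sq_nonneg (x - a)) hK)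
    linear_combination h2
  unfold W7hat
  exact add_le_add (add_le_add t1 t2) t3
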